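/- Let K be a field of characteristic not 2 and let u₁, u₂, u₃ be independent transcendentals over K. Let σ be the K-automorphism of K(u₁,u₂,u₃) with σ(u₁) = −u₁, σ(u₂) = (3u₁² + 1)/u₂, σ(u₃) = ε·u₃ where ε ∈ {±1}. Then K(u₁,u₂,u₃)^⟨σ⟩ = K(q₁, q₂, q₃), where q₁ = (3u₁² + u₂² + 1)/u₂, q₂ = −(3u₁² − u₂² + 1)/(u₁u₂), and q₃ = u₃ if ε = 1, while q₃ = u₃/u₁ if ε = −1. -/

import Mathlib

open MvPolynomial IntermediateField

set_option maxHeartbeats 2000000 in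
open Classical in
theorem fixed_field_lemqq (K F : Type*) [Field K] [Field F]
    [Algebra K F] [Algebra (MvPolynomial (Fin 3) K) F]
    [IsScalarTower K (MvPolynomial (Fin 3) K) F]
    [IsFractionRing (MvPolynomial (Fin 3) K) F]
    (h2 : (2 : K) ≠ 0) (ε : K) (hε : ε = 1 ∨ ε = -1)
    (u₁ u₂ u₃ : F)
    (hu₁ : u₁ = algebraMap (MvPolynomial (Fin 3) K) F (X 0))
    (hu₂ : u₂ = algebraMap (MvPolynomial (Fin 3) K) F (X 1))
    (hu₃ : u₃ = algebraMap (MvPolynomial (Fin 3) K) F (X 2))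
    (σ : F ≃ₐ[K] F)
    (hσ₁ : σ u₁ = -u₁)
    (hσ₂ : σ u₂ = (3 * u₁ ^ 2 + 1) / u₂)
    (hσ₃ : σ u₃ = algebraMap K F ε * u₃) :
    fixedField (Subgroup.zpowers σ) =
      adjoin K {(3 * u₁ ^ 2 + u₂ ^ 2 + 1) / u₂,
                -((3 * u₁ ^ 2 - u₂ ^ 2 + 1) / (u₁ * u₂)),
                if ε = 1 then u₃ else u₃ / u₁} := by
  have inj : Function.Injective (algebraMap (MvPolynomial (Fin 3) K) F) :=
    IsFractionRing.injective _ _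
  have injK : Function.Injective (algebraMap K F) := (algebraMap K F).injective
  -- nonvanishing helper
  have aux_ne : ∀ (v : Fin 3 → K) (p : MvPolynomial (Fin 3) K),
      MvPolynomial.aeval v p ≠ 0 →
      algebraMap (MvPolynomial (Fin 3) K) F p ≠ 0 := by
    intro v p hp hz
    apply hp
    have : p = 0 := inj (by simpa using hz)
    rw [this]; simp
  have h2F : (2 : F) ≠ 0 := by
    intro h
    exact h2 (injK (by rw [map_ofNat, map_zero]; exact h))
  have hu1ne : u₁ ≠ 0 := by
    rw [hu₁]
    exact aux_ne (fun _ => 1) _ (by simp)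
  have hu2ne : u₂ ≠ 0 := by
    rw [hu₂]
    exact aux_ne (fun _ => 1) _ (by simp)
  have hane : 3 * u₁ ^ 2 + 1 ≠ 0 := by
    rw [hu₁]
    have : (3 : F) * (algebraMap (MvPolynomial (Fin 3) K) F (X 0)) ^ 2 + 1
        = algebraMap (MvPolynomial (Fin 3) K) F (3 * X 0 ^ 2 + 1) := by
      simp [map_add, map_mul, map_pow, map_one, map_ofNat]
    rw [this]
    exact aux_ne (fun _ => 0) _ (by simp)
  -- the big field is generated by u₁, u₂, u₃
  have hpoly : ∀ p : MvPolynomial (Fin 3) K,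
      algebraMap (MvPolynomial (Fin 3) K) F p ∈ adjoin K {u₁, u₂, u₃} := by
    intro p
    induction p using MvPolynomial.induction_on with
    | C a =>
        rw [show (MvPolynomial.C a : MvPolynomial (Fin 3) K)
            = algebraMap K (MvPolynomial (Fin 3) K) a from rfl,
          ← IsScalarTower.algebraMap_apply]
        exact (adjoin K {u₁, u₂, u₃}).algebraMap_mem a
    | add p q hp hq => rw [map_add]; exact add_mem hp hq
    | mul_X p i hp =>
        rw [map_mul]
        refine mul_mem hp ?_
        fin_cases i
        · exact subset_adjoin K _
            (show algebraMap (MvPolynomial (Fin 3) K) F (X 0) ∈ _ by rw [← hu₁]; simp)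
        · exact subset_adjoin K _
            (show algebraMap (MvPolynomial (Fin 3) K) F (X 1) ∈ _ by rw [← hu₂]; simp)
        · exact subset_adjoin K _
            (show algebraMap (MvPolynomial (Fin 3) K) F (X 2) ∈ _ by rw [← hu₃]; simp)
  have hT : adjoin K {u₁, u₂, u₃} = ⊤ := by
    rw [eq_top_iff]
    rintro x -
    obtain ⟨p, q, hq, rfl⟩ := IsFractionRing.div_surjective (A := MvPolynomial (Fin 3) K) x
    exact div_mem (hpoly p) (hpoly q)
  -- membership in fixedField of zpowers
  have mem_fixed : ∀ (τ : F ≃ₐ[K] F) (x : F),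
      x ∈ fixedField (Subgroup.zpowers τ) ↔ τ x = x := by
    intro τ x
    constructor
    · intro h
      exact h ⟨τ, Subgroup.mem_zpowers τ⟩
    · intro h
      have hinv : τ⁻¹ x = x := by
        show τ.symm x = x
        rw [AlgEquiv.symm_apply_eq, h]
      have hz : ∀ n : ℤ, (τ ^ n) x = x := by
        intro n
        induction n using Int.induction_on with
        | zero => simp
        | succ m ih => rw [zpow_add_one, AlgEquiv.mul_apply, h, ih]
        | pred m ih => rw [zpow_sub_one, AlgEquiv.mul_apply, hinv, ih]
      rintro ⟨g, hg⟩
      obtain ⟨n, rfl⟩ := Subgroup.mem_zpowers_iff.mp hg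
      exact hz n
  -- σ is an involution
  have hσσ : σ * σ = 1 := by
    apply AlgEquiv.ext
    intro x
    have hle : adjoin K {u₁, u₂, u₃} ≤ fixedField (Subgroup.zpowers (σ * σ)) := by
      rw [adjoin_le_iff]
      rintro y (rfl | rfl | rfl)
      · rw [SetLike.mem_coe, mem_fixed, AlgEquiv.mul_apply, hσ₁, map_neg, hσ₁, neg_neg]
      · rw [SetLike.mem_coe, mem_fixed, AlgEquiv.mul_apply, hσ₂, map_div₀, map_add, map_mul, map_one,
          map_pow, hσ₁, hσ₂]
        rw [show σ (3 : F) = 3 from map_ofNat σ 3]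
        field_simp
      · rw [SetLike.mem_coe, mem_fixed, AlgEquiv.mul_apply, hσ₃, map_mul, AlgEquiv.commutes, hσ₃,
          ← mul_assoc, ← map_mul]
        rcases hε with rfl | rfl <;> simp
    rw [hT] at hle
    have hx : x ∈ fixedField (Subgroup.zpowers (σ * σ)) := hle trivial
    rw [mem_fixed] at hx
    simpa using hx
  have hσne : σ ≠ 1 := by
    intro h
    rw [h] at hσ₁
    simp only [AlgEquiv.one_apply] at hσ₁
    have : (2 : F) * u₁ = 0 := by linear_combination hσ₁
    rcases mul_eq_zero.mp this with h' | h'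
    · exact h2F h'
    · exact hu1ne h'
  have horder : orderOf σ = 2 := by
    apply orderOf_eq_prime
    · rw [pow_two]; exact hσσ
    · exact hσne
  haveI : Finite (Subgroup.zpowers σ) := by
    have : IsOfFinOrder σ := by rw [← orderOf_pos_iff, horder]; norm_num
    exact this.finite_zpowers
  haveI : Fintype (Subgroup.zpowers σ) := Fintype.ofFinite _
  have hfr : Module.finrank (fixedField (Subgroup.zpowers σ)) F = 2 := by
    have h1 : Module.finrank (fixedField (Subgroup.zpowers σ)) F
        = Fintype.card (Subgroup.zpowers σ) :=
      FixedPoints.finrank_eq_card (Subgroup.zpowers σ) F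
    rw [h1, ← Nat.card_eq_fintype_card, Nat.card_zpowers, horder]
  set q₁ : F := (3 * u₁ ^ 2 + u₂ ^ 2 + 1) / u₂ with hq1
  set q₂ : F := -((3 * u₁ ^ 2 - u₂ ^ 2 + 1) / (u₁ * u₂)) with hq2
  set q₃ : F := (if ε = 1 then u₃ else u₃ / u₁) with hq3
  set E := adjoin K {q₁, q₂, q₃} with hE
  have hσq1 : σ q₁ = q₁ := by
    rw [hq1, map_div₀, map_add, map_add, map_mul, map_pow, map_pow, map_one, hσ₁, hσ₂,
      show σ (3 : F) = 3 from map_ofNat σ 3]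
    field_simp
    ring
  have hσq2 : σ q₂ = q₂ := by
    rw [hq2, map_neg, map_div₀, map_add, map_sub, map_mul, map_pow, map_pow, map_one,
      map_mul, hσ₁, hσ₂, show σ (3 : F) = 3 from map_ofNat σ 3]
    field_simp
    ring
  have hσq3 : σ q₃ = q₃ := by
    rcases hε with rfl | rfl
    · rw [hq3, if_pos rfl, hσ₃, map_one, one_mul]
    · have hne : (-1 : K) ≠ 1 := by
        intro h
        exact h2 (by linear_combination -h)
      rw [hq3, if_neg hne, map_div₀, hσ₃, hσ₁, map_neg, map_one]
      field_simp
  have hu₃eq : u₃ = q₃ ∨ u₃ = q₃ * u₁ := by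
    rcases hε with rfl | rfl
    · left; rw [hq3, if_pos rfl]
    · right
      have hne : (-1 : K) ≠ 1 := by
        intro h
        exact h2 (by linear_combination -h)
      rw [hq3, if_neg hne, div_mul_cancel₀ _ hu1ne]
  have hEfix : E ≤ fixedField (Subgroup.zpowers σ) := by
    rw [hE, adjoin_le_iff]
    rintro y (rfl | rfl | rfl)
    · rw [SetLike.mem_coe, mem_fixed]; exact hσq1
    · rw [SetLike.mem_coe, mem_fixed]; exact hσq2
    · rw [SetLike.mem_coe, mem_fixed]; exact hσq3
  have hq1E : q₁ ∈ E := subset_adjoin K _ (Set.mem_insert _ _)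
  have hq2E : q₂ ∈ E := subset_adjoin K _ (Set.mem_insert_of_mem _ (Set.mem_insert _ _))
  have hq3E : q₃ ∈ E := subset_adjoin K _
    (Set.mem_insert_of_mem _ (Set.mem_insert_of_mem _ rfl))
  have hu2eq : u₂ = (q₁ + u₁ * q₂) / 2 := by
    rw [hq1, hq2]
    field_simp
    ring
  have hd : q₂ ^ 2 + 12 ≠ 0 := by
    intro hd0
    rw [hq2] at hd0
    have h1 : (3 * u₁ ^ 2 - u₂ ^ 2 + 1) ^ 2 + 12 * (u₁ ^ 2 * u₂ ^ 2) = 0 := by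
      have h0 : (u₁ * u₂) ^ 2 ≠ 0 := pow_ne_zero _ (mul_ne_zero hu1ne hu2ne)
      field_simp at hd0
      linear_combination hd0
    have h2' : algebraMap (MvPolynomial (Fin 3) K) F
        ((3 * X 0 ^ 2 - X 1 ^ 2 + 1) ^ 2 + 12 * (X 0 ^ 2 * X 1 ^ 2)) = 0 := by
      simp only [map_add, map_sub, map_mul, map_pow, map_one, map_ofNat]
      rw [← hu₁, ← hu₂]
      exact h1
    exact aux_ne (fun _ => 0) _ (by simp) h2'
  have hsq : u₁ ^ 2 = (q₁ ^ 2 - 4) / (q₂ ^ 2 + 12) := by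
    rw [eq_div_iff hd, hq1, hq2]
    field_simp
    ring
  have h4E : (4 : F) ∈ E := by
    rw [show (4 : F) = algebraMap K F 4 from (map_ofNat _ 4).symm]
    exact E.algebraMap_mem _
  have h12E : (12 : F) ∈ E := by
    rw [show (12 : F) = algebraMap K F 12 from (map_ofNat _ 12).symm]
    exact E.algebraMap_mem _
  have hcE : (q₁ ^ 2 - 4) / (q₂ ^ 2 + 12) ∈ E :=
    div_mem (sub_mem (pow_mem hq1E 2) h4E) (add_mem (pow_mem hq2E 2) h12E)
  -- F = E(u₁)
  have hmemE : ∀ x ∈ E, x ∈ restrictScalars K (adjoin ↥E {u₁}) := by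
    intro x hx
    exact (adjoin ↥E {u₁}).algebraMap_mem ⟨x, hx⟩
  have hu1mem : u₁ ∈ restrictScalars K (adjoin ↥E {u₁}) :=
    subset_adjoin ↥E _ rfl
  have h2mem : (2 : F) ∈ restrictScalars K (adjoin ↥E {u₁}) := by
    rw [show (2 : F) = algebraMap K F 2 from (map_ofNat _ 2).symm]
    exact (restrictScalars K (adjoin ↥E {u₁})).algebraMap_mem _
  have hsub : adjoin K {u₁, u₂, u₃} ≤ restrictScalars K (adjoin ↥E {u₁}) := by
    rw [adjoin_le_iff]
    rintro y (rfl | rfl | rfl)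
    · exact hu1mem
    · rw [hu2eq]
      exact div_mem (add_mem (hmemE _ hq1E) (mul_mem hu1mem (hmemE _ hq2E))) h2mem
    · rcases hu₃eq with h | h
      · rw [h]; exact hmemE _ hq3E
      · rw [h]; exact mul_mem (hmemE _ hq3E) hu1mem
  have htop2 : adjoin ↥E {u₁} = ⊤ := by
    rw [eq_top_iff]
    intro x _
    have hx : x ∈ adjoin K {u₁, u₂, u₃} := by rw [hT]; trivial
    exact hsub hx
  have heval : Polynomial.aeval u₁
      (Polynomial.X ^ 2 - Polynomial.C (⟨(q₁ ^ 2 - 4) / (q₂ ^ 2 + 12), hcE⟩ : ↥E)) = 0 := by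
    rw [map_sub, map_pow, Polynomial.aeval_X, Polynomial.aeval_C, sub_eq_zero]
    exact hsq
  have hint : IsIntegral ↥E u₁ :=
    ⟨Polynomial.X ^ 2 - Polynomial.C (⟨(q₁ ^ 2 - 4) / (q₂ ^ 2 + 12), hcE⟩ : ↥E),
      Polynomial.monic_X_pow_sub_C _ (by norm_num), heval⟩
  haveI hFD1 : FiniteDimensional ↥E ↥(adjoin ↥E {u₁}) := adjoin.finiteDimensional hint
  haveI hFD : FiniteDimensional ↥E F := by
    rw [htop2] at hFD1
    exact Module.Finite.equiv (IntermediateField.topEquiv (F := ↥E) (E := F)).toLinearEquiv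
  have hfr2 : Module.finrank ↥E F ≤ 2 := by
    have hdeg : (minpoly ↥E u₁).natDegree ≤ 2 := by
      have hdvd := minpoly.dvd ↥E u₁ heval
      have := Polynomial.natDegree_le_of_dvd hdvd
        (Polynomial.monic_X_pow_sub_C (R := ↥E) _ (two_ne_zero)).ne_zero
      simpa [Polynomial.natDegree_X_pow_sub_C] using this
    have h1 : Module.finrank ↥E ↥(adjoin ↥E {u₁}) = (minpoly ↥E u₁).natDegree :=
      adjoin.finrank hint
    have h2' : Module.finrank ↥E F = Module.finrank ↥E ↥(adjoin ↥E {u₁}) := by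
      rw [htop2, IntermediateField.finrank_top']
    rw [h2', h1]
    exact hdeg
  exact (eq_of_le_of_finrank_le' hEfix (by rw [hfr]; exact hfr2)).symm
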